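/- Let C^t ⊆ F^t and C^m ⊆ F^m be perfect binary codes containing the all-zero vectors and let f : C^t → F^m be an arbitrary map. Then the Mollard code M(C^t, C^m) = {(x, y + p1(x), z + p2(x) + f(y)) : x ∈ F^{tm}, y ∈ C^t, z ∈ C^m} ⊆ F^{tm+t+m} is a perfect binary code of length tm + t + m. -/

import Mathlib

open Finset

/-- The binary vector space `F^n`. -/
abbrev F (n : ℕ) : Type := Fin n → ZMod 2

/-- Action of a coordinate permutation: `(π x) i = x (π⁻¹ i)`. -/
def permAct {n : ℕ} (π : Equiv.Perm (Fin n)) (x : F n) : F n := fun i => x (π⁻¹ i)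

/-- `(v, π)` is an isometry fixing the code `C` set-wise. -/
def IsIsoPair {n : ℕ} (C : Set (F n)) (v : F n) (π : Equiv.Perm (Fin n)) : Prop :=
  (fun x => v + permAct π x) '' C = C

/-- `C` is a single-error-correcting perfect binary code. -/
def IsPerfectCode {n : ℕ} (C : Set (F n)) : Prop :=
  ∀ x : F n, ∃! y : F n, y ∈ C ∧ hammingDist x y ≤ 1

/-- `P` is a propelinear structure on the code `C`. -/
def IsPropStructure {n : ℕ} (C : Set (F n)) (P : F n → Equiv.Perm (Fin n)) : Prop :=
  (∀ x ∈ C, IsIsoPair C x (P x)) ∧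
  (∀ x ∈ C, ∀ y ∈ C, P (x + permAct (P x) y) = P x * P y)

/-- `C` admits a propelinear structure. -/
def IsPropelinear {n : ℕ} (C : Set (F n)) : Prop :=
  ∃ P : F n → Equiv.Perm (Fin n), IsPropStructure C P

/-- The rank of a code: dimension of its linear span over GF(2). -/
noncomputable def codeRank {n : ℕ} (C : Set (F n)) : ℕ :=
  Module.finrank (ZMod 2) (Submodule.span (ZMod 2) C)

/-- The kernel of a code `C`: codewords whose translate fixes `C`. -/
def codeKernel {n : ℕ} (C : Set (F n)) : Set (F n) :=
  {x ∈ C | (fun c => x + c) '' C = C}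

/-- A propelinear structure is normalized if codewords in the same coset
of the kernel get the same permutation. -/
def IsNormalized {n : ℕ} (C : Set (F n)) (P : F n → Equiv.Perm (Fin n)) : Prop :=
  ∀ x ∈ C, ∀ y ∈ C, x + y ∈ codeKernel C → P x = P y

/-- A code is transitive if its automorphism group acts transitively on it. -/
def IsTransitive {n : ℕ} (C : Set (F n)) : Prop :=
  ∀ x ∈ C, ∀ y ∈ C, ∃ v π, IsIsoPair C v π ∧ v + permAct π x = y

/-- The (ZMod 2) weight parity `|x| = Σ_i x_i`. -/
def wt {n : ℕ} (x : F n) : ZMod 2 := ∑ i, x i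

/-- Assemble a vector of `F^(2n+1)` from a first block of `n` coordinates,
a middle coordinate and a last block of `n` coordinates. -/
def vasVec {n : ℕ} (a : F n) (b : ZMod 2) (c : F n) : F (2 * n + 1) :=
  fun i =>
    if h : (i : ℕ) < n then a ⟨i, h⟩
    else if h' : (i : ℕ) = n then b
    else c ⟨(i : ℕ) - (n + 1), by have := i.isLt; omega⟩

/-- The Vasil'ev code of `C` with function `lam`. -/
def vasCode {n : ℕ} (C : Set (F n)) (lam : F n → ZMod 2) : Set (F (2 * n + 1)) :=
  {w | ∃ x : F n, ∃ y ∈ C, w = vasVec (x + y) (wt x + lam y) x}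

/-- Assemble a vector of `F^(tm+t+m)` from blocks of `tm`, `t` and `m` coordinates. -/
def mollVec {t m : ℕ} (x : F (t * m)) (b : F t) (c : F m) : F (t * m + t + m) :=
  fun i =>
    if h : (i : ℕ) < t * m then x ⟨i, h⟩
    else if h' : (i : ℕ) < t * m + t then b ⟨(i : ℕ) - t * m, by omega⟩
    else c ⟨(i : ℕ) - (t * m + t), by have := i.isLt; omega⟩

/-- First generalized parity-check function: `p1(x)_i = Σ_j x_{ij}`. -/
def p1 {t m : ℕ} (x : F (t * m)) : F t := fun i => ∑ j : Fin m, x (finProdFinEquiv (i, j))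

/-- Second generalized parity-check function: `p2(x)_j = Σ_i x_{ij}`. -/
def p2 {t m : ℕ} (x : F (t * m)) : F m := fun j => ∑ i : Fin t, x (finProdFinEquiv (i, j))

/-- The Mollard code of `Ct` and `Cm` with function `f`. -/
def mollCode {t m : ℕ} (Ct : Set (F t)) (Cm : Set (F m)) (f : F t → F m) :
    Set (F (t * m + t + m)) :=
  {w | ∃ x : F (t * m), ∃ y ∈ Ct, ∃ z ∈ Cm, w = mollVec x (y + p1 x) (z + p2 x + f y)}

section MollardAux

variable {n t m : ℕ}

lemma F.add_self (a : F n) : a + a = 0 := by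
  funext i
  show a i + a i = 0
  have h : ∀ b : ZMod 2, b + b = 0 := by decide
  exact h _

lemma F.addK (a u : F n) : a + (a + u) = u := by
  rw [← add_assoc, F.add_self, zero_add]

lemma F.eq_of_add_eq_zero {a b : F n} (h : a + b = 0) : b = a := by
  have h2 := congrArg (a + ·) h
  simpa [F.addK] using h2

lemma hd_eq (u v : F n) : hammingDist u v = hammingNorm (u + v) := by
  rw [hammingDist_eq_hammingNorm]
  congr 1
  funext i
  show -u i + v i = u i + v i
  have h : ∀ a b : ZMod 2, -a + b = a + b := by decide
  exact h _ _

lemma hn_single (i : Fin n) : hammingNorm ((Pi.single i 1 : F n)) = 1 := by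
  unfold hammingNorm
  have h : ({j | (Pi.single i 1 : F n) j ≠ 0} : Finset (Fin n)) = {i} := by
    ext j
    simp [Pi.single_apply]
  rw [h, Finset.card_singleton]

lemma hn_le_one {u : F n} (h : hammingNorm u ≤ 1) : u = 0 ∨ ∃ i, u = (Pi.single i 1 : F n) := by
  rcases Nat.le_one_iff_eq_zero_or_eq_one.mp h with h0 | h1
  · exact Or.inl (hammingNorm_eq_zero.mp h0)
  · unfold hammingNorm at h1
    obtain ⟨i, hi⟩ := Finset.card_eq_one.mp h1
    refine Or.inr ⟨i, funext fun j => ?_⟩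
    have hj := Finset.ext_iff.mp hi j
    simp only [Finset.mem_filter, Finset.mem_univ, true_and, Finset.mem_singleton] at hj
    rw [Pi.single_apply]
    by_cases hji : j = i
    · rw [if_pos hji]
      have h2 : u j ≠ 0 := hj.mpr hji
      revert h2; generalize u j = a; revert a; decide
    · rw [if_neg hji]
      by_contra hne
      exact hji (hj.mp hne)

lemma single_ne_zero (i : Fin n) : (Pi.single i 1 : F n) ≠ 0 := by
  intro h
  have := congrFun h i
  simp at this

lemma single_injective {i j : Fin n} (h : (Pi.single i 1 : F n) = Pi.single j 1) : i = j := by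
  by_contra hne
  have := congrFun h i
  rw [Pi.single_eq_same, Pi.single_apply, if_neg hne] at this
  exact one_ne_zero this

end MollardAux

section MollardSplit

variable {t m : ℕ}

def part1 (w : F (t * m + t + m)) : F (t * m) :=
  fun i => w ⟨i, by have := i.isLt; omega⟩

def part2 (w : F (t * m + t + m)) : F t :=
  fun i => w ⟨t * m + i, by have := i.isLt; omega⟩

def part3 (w : F (t * m + t + m)) : F m :=
  fun i => w ⟨t * m + t + i, by have := i.isLt; omega⟩

def emb1 : Fin (t * m) ↪ Fin (t * m + t + m) :=
  ⟨fun i => ⟨i, by have := i.isLt; omega⟩, by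
    intro a b h
    apply Fin.ext
    have h3 := congrArg Fin.val h
    exact h3⟩

def emb2 : Fin t ↪ Fin (t * m + t + m) :=
  ⟨fun i => ⟨t * m + i, by have := i.isLt; omega⟩, by
    intro a b h
    have h2 : t * m + (a : ℕ) = t * m + (b : ℕ) := by
      have h3 := congrArg Fin.val h
      exact h3
    exact Fin.ext (by omega)⟩

def emb3 : Fin m ↪ Fin (t * m + t + m) :=
  ⟨fun i => ⟨t * m + t + i, by have := i.isLt; omega⟩, by
    intro a b h
    have h2 : t * m + t + (a : ℕ) = t * m + t + (b : ℕ) := by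
      have h3 := congrArg Fin.val h
      exact h3
    exact Fin.ext (by omega)⟩

lemma hsplit (u v : F (t * m + t + m)) :
    hammingDist u v = hammingDist (part1 u) (part1 v) + hammingDist (part2 u) (part2 v)
      + hammingDist (part3 u) (part3 v) := by
  have key : ({i | u i ≠ v i} : Finset (Fin (t * m + t + m))) =
      (({i | part1 u i ≠ part1 v i} : Finset (Fin (t * m))).map emb1 ∪
        ({i | part2 u i ≠ part2 v i} : Finset (Fin t)).map emb2) ∪
        ({i | part3 u i ≠ part3 v i} : Finset (Fin m)).map emb3 := by
    ext i
    simp only [Finset.mem_filter, Finset.mem_univ, true_and, Finset.mem_union,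
      Finset.mem_map]
    constructor
    · intro hne
      by_cases h1 : (i : ℕ) < t * m
      · exact Or.inl (Or.inl ⟨⟨i, h1⟩, hne, Fin.ext rfl⟩)
      · by_cases h2 : (i : ℕ) < t * m + t
        · refine Or.inl (Or.inr ⟨⟨(i : ℕ) - t * m, by omega⟩, ?_,
            Fin.ext (by show t * m + ((i : ℕ) - t * m) = (i : ℕ); omega)⟩)
          show u ⟨t * m + ((i : ℕ) - t * m), _⟩ ≠ v ⟨t * m + ((i : ℕ) - t * m), _⟩
          have hidx : (⟨t * m + ((i : ℕ) - t * m), by omega⟩ : Fin (t * m + t + m)) = i :=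
            Fin.ext (by show t * m + ((i : ℕ) - t * m) = (i : ℕ); omega)
          rw [hidx]; exact hne
        · refine Or.inr ⟨⟨(i : ℕ) - (t * m + t), by have := i.isLt; omega⟩, ?_,
            Fin.ext (by show t * m + t + ((i : ℕ) - (t * m + t)) = (i : ℕ); omega)⟩
          show u ⟨t * m + t + ((i : ℕ) - (t * m + t)), _⟩ ≠
            v ⟨t * m + t + ((i : ℕ) - (t * m + t)), _⟩
          have hidx : (⟨t * m + t + ((i : ℕ) - (t * m + t)), by have := i.isLt; omega⟩ :
              Fin (t * m + t + m)) = i :=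
            Fin.ext (by show t * m + t + ((i : ℕ) - (t * m + t)) = (i : ℕ); omega)
          rw [hidx]; exact hne
    · rintro ((⟨a, ha, rfl⟩ | ⟨a, ha, rfl⟩) | ⟨a, ha, rfl⟩) <;> exact ha
  have d1 : Disjoint (({i | part1 u i ≠ part1 v i} : Finset (Fin (t * m))).map emb1)
      (({i | part2 u i ≠ part2 v i} : Finset (Fin t)).map emb2) := by
    rw [Finset.disjoint_left]
    intro k hk1 hk2
    obtain ⟨a, _, ha⟩ := Finset.mem_map.mp hk1
    obtain ⟨b, _, hb⟩ := Finset.mem_map.mp hk2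
    have h1 : (a : ℕ) = (k : ℕ) := congrArg Fin.val ha
    have h2 : t * m + (b : ℕ) = (k : ℕ) := congrArg Fin.val hb
    have := a.isLt; omega
  have d2 : Disjoint ((({i | part1 u i ≠ part1 v i} : Finset (Fin (t * m))).map emb1 ∪
      ({i | part2 u i ≠ part2 v i} : Finset (Fin t)).map emb2))
      (({i | part3 u i ≠ part3 v i} : Finset (Fin m)).map emb3) := by
    rw [Finset.disjoint_left]
    intro k hk1 hk2
    obtain ⟨b, _, hb⟩ := Finset.mem_map.mp hk2
    have h2 : t * m + t + (b : ℕ) = (k : ℕ) := congrArg Fin.val hb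
    rcases Finset.mem_union.mp hk1 with hk | hk
    · obtain ⟨a, _, ha⟩ := Finset.mem_map.mp hk
      have h1 : (a : ℕ) = (k : ℕ) := congrArg Fin.val ha
      have := a.isLt; omega
    · obtain ⟨a, _, ha⟩ := Finset.mem_map.mp hk
      have h1 : t * m + (a : ℕ) = (k : ℕ) := congrArg Fin.val ha
      have := a.isLt; omega
  show ({i | u i ≠ v i} : Finset _).card = _
  rw [key, Finset.card_union_of_disjoint d2, Finset.card_union_of_disjoint d1,
    Finset.card_map, Finset.card_map, Finset.card_map]
  rfl

lemma part1_moll (x : F (t * m)) (b : F t) (c : F m) : part1 (mollVec x b c) = x := by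
  funext i
  simp only [part1, mollVec, i.isLt, dif_pos]

lemma part2_moll (x : F (t * m)) (b : F t) (c : F m) : part2 (mollVec x b c) = b := by
  funext i
  have hi := i.isLt
  show mollVec x b c ⟨t * m + (i : ℕ), _⟩ = b i
  simp only [mollVec]
  rw [dif_neg (by show ¬ (t * m + (i : ℕ) < t * m); omega),
    dif_pos (by show t * m + (i : ℕ) < t * m + t; omega)]
  exact congrArg b (Fin.ext (by show t * m + (i : ℕ) - t * m = (i : ℕ); omega))

lemma part3_moll (x : F (t * m)) (b : F t) (c : F m) : part3 (mollVec x b c) = c := by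
  funext i
  have hi := i.isLt
  show mollVec x b c ⟨t * m + t + (i : ℕ), _⟩ = c i
  simp only [mollVec]
  rw [dif_neg (by show ¬ (t * m + t + (i : ℕ) < t * m); omega),
    dif_neg (by show ¬ (t * m + t + (i : ℕ) < t * m + t); omega)]
  exact congrArg c (Fin.ext (by show t * m + t + (i : ℕ) - (t * m + t) = (i : ℕ); omega))

lemma mollVec_eta (w : F (t * m + t + m)) :
    mollVec (part1 w) (part2 w) (part3 w) = w := by
  funext i
  have hi := i.isLt
  simp only [mollVec]
  by_cases h1 : (i : ℕ) < t * m
  · rw [dif_pos h1]; rfl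
  · rw [dif_neg h1]
    by_cases h2 : (i : ℕ) < t * m + t
    · rw [dif_pos h2]
      exact congrArg w (Fin.ext (by show t * m + ((i : ℕ) - t * m) = (i : ℕ); omega))
    · rw [dif_neg h2]
      exact congrArg w (Fin.ext (by show t * m + t + ((i : ℕ) - (t * m + t)) = (i : ℕ); omega))

lemma hd_moll (x x' : F (t * m)) (b b' : F t) (c c' : F m) :
    hammingDist (mollVec x b c) (mollVec x' b' c') =
      hammingDist x x' + hammingDist b b' + hammingDist c c' := by
  rw [hsplit, part1_moll, part1_moll, part2_moll, part2_moll, part3_moll, part3_moll]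

end MollardSplit

section MollardFlip

variable {t m : ℕ}

lemma p1_flip (x : F (t * m)) (i : Fin t) (j : Fin m) :
    p1 (x + (Pi.single (finProdFinEquiv (i, j)) 1 : F (t * m))) =
      p1 x + (Pi.single i 1 : F t) := by
  funext i'
  simp only [p1, Pi.add_apply]
  rw [Finset.sum_add_distrib]
  congr 1
  rw [Pi.single_apply]
  have step : ∀ j' : Fin m,
      (Pi.single (finProdFinEquiv (i, j)) 1 : F (t * m)) (finProdFinEquiv (i', j'))
        = if i' = i ∧ j' = j then 1 else 0 := by
    intro j'
    rw [Pi.single_apply]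
    by_cases h : i' = i ∧ j' = j
    · rcases h with ⟨h1, h2⟩; subst h1; subst h2; simp
    · rw [if_neg ?_, if_neg h]
      intro hc
      have := finProdFinEquiv.injective hc
      rw [Prod.mk.injEq] at this
      exact h this
  rw [Finset.sum_congr rfl (fun j' _ => step j')]
  by_cases h : i' = i
  · subst h; simp
  · simp [h]

lemma p2_flip (x : F (t * m)) (i : Fin t) (j : Fin m) :
    p2 (x + (Pi.single (finProdFinEquiv (i, j)) 1 : F (t * m))) =
      p2 x + (Pi.single j 1 : F m) := by
  funext j'
  simp only [p2, Pi.add_apply]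
  rw [Finset.sum_add_distrib]
  congr 1
  rw [Pi.single_apply]
  have step : ∀ i' : Fin t,
      (Pi.single (finProdFinEquiv (i, j)) 1 : F (t * m)) (finProdFinEquiv (i', j'))
        = if i' = i ∧ j' = j then 1 else 0 := by
    intro i'
    rw [Pi.single_apply]
    by_cases h : i' = i ∧ j' = j
    · rcases h with ⟨h1, h2⟩; subst h1; subst h2; simp
    · rw [if_neg ?_, if_neg h]
      intro hc
      have := finProdFinEquiv.injective hc
      rw [Prod.mk.injEq] at this
      exact h this
  rw [Finset.sum_congr rfl (fun i' _ => step i')]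
  by_cases h : j' = j
  · subst h; simp
  · simp [h]

end MollardFlip

section MollardMain

variable {t m : ℕ}

lemma uniq_aux {Ct : Set (F t)} {Cm : Set (F m)} {f : F t → F m}
    {x : F (t * m)} {b : F t} {c : F m} {y : F t} {z : F m}
    (hyU : ∀ y', y' ∈ Ct → hammingDist (b + p1 x) y' ≤ 1 → y' = y)
    (hzU : ∀ z', z' ∈ Cm → hammingDist (c + p2 x + f y) z' ≤ 1 → z' = z)
    {x' : F (t * m)} {y' : F t} (hy' : y' ∈ Ct) {z' : F m} (hz' : z' ∈ Cm)
    (hd : hammingDist (mollVec x b c) (mollVec x' (y' + p1 x') (z' + p2 x' + f y')) ≤ 1) :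
    y' = y ∧ z' = z ∧
      ((x' = x ∧ (b + p1 x + y = 0 ∨ c + p2 x + f y + z = 0)) ∨
        ∃ i j, x' = x + (Pi.single (finProdFinEquiv (i, j)) 1 : F (t * m)) ∧
          b + p1 x + y = (Pi.single i 1 : F t) ∧
          c + p2 x + f y + z = (Pi.single j 1 : F m)) := by
  rw [hd_moll] at hd
  have hd1 : hammingNorm (x + x') ≤ 1 := by rw [← hd_eq]; omega
  rcases hn_le_one hd1 with h0 | ⟨k, hk⟩
  · -- x' = x
    have hxx : x' = x := F.eq_of_add_eq_zero h0
    rw [hxx] at hd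
    have hy2 : hammingDist (b + p1 x) y' ≤ 1 := by
      have e : b + p1 x + y' = b + (y' + p1 x) := by abel
      rw [hd_eq, e, ← hd_eq]; omega
    have hyy : y' = y := hyU y' hy' hy2
    rw [hyy] at hd
    have hz2 : hammingDist (c + p2 x + f y) z' ≤ 1 := by
      have e : c + p2 x + f y + z' = c + (z' + p2 x + f y) := by abel
      rw [hd_eq, e, ← hd_eq]; omega
    have hzz : z' = z := hzU z' hz' hz2
    rw [hzz] at hd
    refine ⟨hyy, hzz, Or.inl ⟨hxx, ?_⟩⟩
    have e1 : hammingDist b (y + p1 x) = hammingNorm (b + p1 x + y) := by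
      rw [hd_eq]; congr 1; abel
    have e2 : hammingDist c (z + p2 x + f y) = hammingNorm (c + p2 x + f y + z) := by
      rw [hd_eq]; congr 1; abel
    rw [hammingDist_self, e1, e2] at hd
    have hor : hammingNorm (b + p1 x + y) = 0 ∨ hammingNorm (c + p2 x + f y + z) = 0 := by
      omega
    rcases hor with h | h
    · exact Or.inl (hammingNorm_eq_zero.mp h)
    · exact Or.inr (hammingNorm_eq_zero.mp h)
  · -- x' = x + single k
    have hx' : x' = x + (Pi.single k 1 : F (t * m)) := by
      have h2 := congrArg (x + ·) hk
      simpa [F.addK] using h2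
    rcases hpair : finProdFinEquiv.symm k with ⟨i, j⟩
    have hk2 : k = finProdFinEquiv (i, j) := by
      rw [← hpair]
      exact (Equiv.apply_symm_apply _ _).symm
    rw [hk2] at hx'
    rw [hx'] at hd
    have h1 : hammingDist x (x + (Pi.single (finProdFinEquiv (i, j)) 1 : F (t * m))) = 1 := by
      rw [hd_eq, F.addK, hn_single]
    rw [h1, p1_flip, p2_flip] at hd
    have hdb : hammingDist b (y' + (p1 x + (Pi.single i 1 : F t))) = 0 := by omega
    have hdc : hammingDist c (z' + (p2 x + (Pi.single j 1 : F m)) + f y') = 0 := by omega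
    have hb : b = y' + (p1 x + (Pi.single i 1 : F t)) := hammingDist_eq_zero.mp hdb
    have hc : c = z' + (p2 x + (Pi.single j 1 : F m)) + f y' := hammingDist_eq_zero.mp hdc
    -- show y' = y
    have het' : b + p1 x + y' = (Pi.single i 1 : F t) := by
      rw [hb]
      have e : y' + (p1 x + (Pi.single i 1 : F t)) + p1 x + y'
          = (Pi.single i 1 : F t) + (y' + y') + (p1 x + p1 x) := by abel
      rw [e, F.add_self, F.add_self, add_zero, add_zero]
    have hy2 : hammingDist (b + p1 x) y' ≤ 1 := by
      rw [hd_eq]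
      have e : b + p1 x + y' = b + p1 x + y' := rfl
      rw [het', hn_single]
    have hyy : y' = y := hyU y' hy' hy2
    have het : b + p1 x + y = (Pi.single i 1 : F t) := by rw [← hyy]; exact het'
    -- show z' = z
    have hem' : c + p2 x + f y + z' = (Pi.single j 1 : F m) := by
      rw [hc, hyy]
      have e : z' + (p2 x + (Pi.single j 1 : F m)) + f y + p2 x + f y + z'
          = (Pi.single j 1 : F m) + (z' + z') + (p2 x + p2 x) + (f y + f y) := by abel
      rw [e, F.add_self, F.add_self, F.add_self, add_zero, add_zero, add_zero]
    have hz2 : hammingDist (c + p2 x + f y) z' ≤ 1 := by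
      rw [hd_eq, hem', hn_single]
    have hzz : z' = z := hzU z' hz' hz2
    have hem : c + p2 x + f y + z = (Pi.single j 1 : F m) := by rw [← hzz]; exact hem'
    exact ⟨hyy, hzz, Or.inr ⟨i, j, hx', het, hem⟩⟩

end MollardMain

section MollardBranches

variable {t m : ℕ}

lemma branch1 {Ct : Set (F t)} {Cm : Set (F m)} {f : F t → F m}
    (x : F (t * m)) (b : F t) (c : F m) {y : F t} {z : F m}
    (hyC : y ∈ Ct) (hzC : z ∈ Cm)
    (hyU : ∀ y', y' ∈ Ct → hammingDist (b + p1 x) y' ≤ 1 → y' = y)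
    (hzU : ∀ z', z' ∈ Cm → hammingDist (c + p2 x + f y) z' ≤ 1 → z' = z)
    (hle1 : hammingNorm (b + p1 x + y) ≤ 1)
    (hle2 : hammingNorm (c + p2 x + f y + z) ≤ 1)
    (h0 : b + p1 x + y = 0 ∨ c + p2 x + f y + z = 0) :
    ∃! w', w' ∈ mollCode Ct Cm f ∧ hammingDist (mollVec x b c) w' ≤ 1 := by
  refine ⟨mollVec x (y + p1 x) (z + p2 x + f y), ⟨⟨x, y, hyC, z, hzC, rfl⟩, ?_⟩, ?_⟩
  · rw [hd_moll, hammingDist_self]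
    have e1 : hammingDist b (y + p1 x) = hammingNorm (b + p1 x + y) := by
      rw [hd_eq]; congr 1; abel
    have e2 : hammingDist c (z + p2 x + f y) = hammingNorm (c + p2 x + f y + z) := by
      rw [hd_eq]; congr 1; abel
    rw [e1, e2]
    rcases h0 with h | h <;> rw [h, hammingNorm_zero] <;> omega
  · rintro w'' ⟨⟨x', y', hy', z', hz', rfl⟩, hd⟩
    obtain ⟨hy'', hz'', hcase⟩ := uniq_aux hyU hzU hy' hz' hd
    rw [hy'', hz'']
    rcases hcase with ⟨hx, -⟩ | ⟨i, j, -, heti, hemj⟩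
    · rw [hx]
    · exfalso
      rcases h0 with h | h
      · rw [h] at heti; exact single_ne_zero i heti.symm
      · rw [h] at hemj; exact single_ne_zero j hemj.symm

lemma branch2 {Ct : Set (F t)} {Cm : Set (F m)} {f : F t → F m}
    (x : F (t * m)) (b : F t) (c : F m) {y : F t} {z : F m}
    (hyC : y ∈ Ct) (hzC : z ∈ Cm)
    (hyU : ∀ y', y' ∈ Ct → hammingDist (b + p1 x) y' ≤ 1 → y' = y)
    (hzU : ∀ z', z' ∈ Cm → hammingDist (c + p2 x + f y) z' ≤ 1 → z' = z)
    {i : Fin t} {j : Fin m}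
    (het : b + p1 x + y = (Pi.single i 1 : F t))
    (hem : c + p2 x + f y + z = (Pi.single j 1 : F m)) :
    ∃! w', w' ∈ mollCode Ct Cm f ∧ hammingDist (mollVec x b c) w' ≤ 1 := by
  set d : F (t * m) := (Pi.single (finProdFinEquiv (i, j)) 1 : F (t * m)) with hdd
  refine ⟨mollVec (x + d) (y + p1 (x + d)) (z + p2 (x + d) + f y), ⟨⟨x + d, y, hyC, z, hzC, rfl⟩, ?_⟩, ?_⟩
  · rw [hd_moll, hdd, p1_flip, p2_flip]
    have h1 : hammingDist x (x + (Pi.single (finProdFinEquiv (i, j)) 1 : F (t * m))) = 1 := by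
      rw [hd_eq, F.addK, hn_single]
    have h2 : hammingDist b (y + (p1 x + (Pi.single i 1 : F t))) = 0 := by
      rw [hd_eq]
      have e : b + (y + (p1 x + (Pi.single i 1 : F t)))
          = (b + p1 x + y) + (Pi.single i 1 : F t) := by abel
      rw [e, het, F.add_self, hammingNorm_zero]
    have h3 : hammingDist c (z + (p2 x + (Pi.single j 1 : F m)) + f y) = 0 := by
      rw [hd_eq]
      have e : c + (z + (p2 x + (Pi.single j 1 : F m)) + f y)
          = (c + p2 x + f y + z) + (Pi.single j 1 : F m) := by abel
      rw [e, hem, F.add_self, hammingNorm_zero]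
    rw [h1, h2, h3]
  · rintro w'' ⟨⟨x', y', hy', z', hz', rfl⟩, hd⟩
    obtain ⟨hy'', hz'', hcase⟩ := uniq_aux hyU hzU hy' hz' hd
    rw [hy'', hz'']
    rcases hcase with ⟨-, hor⟩ | ⟨i', j', hx', het', hem'⟩
    · exfalso
      rcases hor with h | h
      · rw [het] at h; exact single_ne_zero i h
      · rw [hem] at h; exact single_ne_zero j h
    · have hii : i' = i := single_injective (het'.symm.trans het)
      have hjj : j' = j := single_injective (hem'.symm.trans hem)
      rw [hii, hjj] at hx'
      rw [hx']

end MollardBranches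

/-- The Mollard code of two perfect codes containing `0` with an arbitrary
function `f` is perfect. -/
theorem mollard_perfect {t m : ℕ} (Ct : Set (F t)) (Cm : Set (F m))
    (hCt : IsPerfectCode Ct) (h0t : (0 : F t) ∈ Ct)
    (hCm : IsPerfectCode Cm) (h0m : (0 : F m) ∈ Cm)
    (f : F t → F m) : IsPerfectCode (mollCode Ct Cm f) := by
  intro w
  obtain ⟨y, ⟨hyC, hyd⟩, hyu⟩ := hCt (part2 w + p1 (part1 w))
  obtain ⟨z, ⟨hzC, hzd⟩, hzu⟩ := hCm (part3 w + p2 (part1 w) + f y)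
  have hyU : ∀ y', y' ∈ Ct → hammingDist (part2 w + p1 (part1 w)) y' ≤ 1 → y' = y :=
    fun y' h1 h2 => hyu y' ⟨h1, h2⟩
  have hzU : ∀ z', z' ∈ Cm → hammingDist (part3 w + p2 (part1 w) + f y) z' ≤ 1 → z' = z :=
    fun z' h1 h2 => hzu z' ⟨h1, h2⟩
  have hle1 : hammingNorm (part2 w + p1 (part1 w) + y) ≤ 1 := by
    rw [← hd_eq]; exact hyd
  have hle2 : hammingNorm (part3 w + p2 (part1 w) + f y + z) ≤ 1 := by
    rw [← hd_eq]; exact hzd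
  rw [show w = mollVec (part1 w) (part2 w) (part3 w) from (mollVec_eta w).symm]
  rcases hn_le_one hle1 with het | ⟨i, het⟩
  · exact branch1 _ _ _ hyC hzC hyU hzU hle1 hle2 (Or.inl het)
  · rcases hn_le_one hle2 with hem | ⟨j, hem⟩
    · exact branch1 _ _ _ hyC hzC hyU hzU hle1 hle2 (Or.inr hem)
    · exact branch2 _ _ _ hyC hzC hyU hzU het hem
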